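/- Every effect E on a complex Hilbert space H is the supremum, in the partially ordered set E(H), of the set of weak atoms it majorizes: E = sup { tP : P a rank-one projection, t ∈ [0,1], tP ≤ E }. -/

import Mathlib

open scoped InnerProductSpace
set_option synthInstance.maxHeartbeats 1000000
set_option maxHeartbeats 1000000
set_option linter.unusedSectionVars false

/-- An effect: a positive operator majorized by the identity (Loewner order). -/
def IsEffect {H : Type} [NormedAddCommGroup H] [InnerProductSpace ℂ H] [CompleteSpace H]
    (E : H →L[ℂ] H) : Prop := 0 ≤ E ∧ E ≤ 1

/-- A rank-one (orthogonal) projection. -/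
def IsRankOneProjection {H : Type} [NormedAddCommGroup H] [InnerProductSpace ℂ H]
    [CompleteSpace H] (P : H →L[ℂ] H) : Prop :=
  IsIdempotentElem P ∧ IsSelfAdjoint P ∧ Module.finrank ℂ (LinearMap.range P.toLinearMap) = 1

section Aux

variable {H : Type} [NormedAddCommGroup H] [InnerProductSpace ℂ H] [CompleteSpace H]

/-- The rank-one operator `z ↦ ⟪y, z⟫ • y`. -/
noncomputable def rankOneProj (y : H) : H →L[ℂ] H := (innerSL ℂ y).smulRight y

lemma rankOneProj_apply (y z : H) : rankOneProj y z = ⟪y, z⟫_ℂ • y := rfl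

lemma isRankOneProjection_rankOneProj (y : H) (hy : ‖y‖ = 1) :
    IsRankOneProjection (rankOneProj y) := by
  have hyy : ⟪y, y⟫_ℂ = 1 := by
    rw [inner_self_eq_norm_sq_to_K, hy]; norm_num
  have hy0 : y ≠ 0 := by intro h; rw [h, norm_zero] at hy; norm_num at hy
  refine ⟨?_, ?_, ?_⟩
  · ext z
    simp [ContinuousLinearMap.mul_apply, rankOneProj_apply, inner_smul_right, hyy, hy]
  · rw [ContinuousLinearMap.isSelfAdjoint_iff_isSymmetric]
    intro a b
    simp only [ContinuousLinearMap.coe_coe, rankOneProj_apply, inner_smul_left,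
      inner_smul_right, ← inner_conj_symm a y]
    ring
  · have hr : LinearMap.range (rankOneProj y).toLinearMap = ℂ ∙ y := by
      apply le_antisymm
      · rintro _ ⟨z, rfl⟩
        exact Submodule.smul_mem _ _ (Submodule.mem_span_singleton_self y)
      · rw [Submodule.span_singleton_le_iff_mem]
        exact ⟨y, by simp [rankOneProj_apply, hyy, hy]⟩
    rw [hr]
    exact finrank_span_singleton hy0

lemma le_iff_re_inner (A C : H →L[ℂ] H) (hA : IsSelfAdjoint A) (hC : IsSelfAdjoint C) :
    A ≤ C ↔ ∀ u, RCLike.re ⟪A u, u⟫_ℂ ≤ RCLike.re ⟪C u, u⟫_ℂ := by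
  rw [ContinuousLinearMap.le_def]
  constructor
  · intro h u
    have h2 := h.re_inner_nonneg_left u
    rwa [ContinuousLinearMap.sub_apply, inner_sub_left, map_sub, sub_nonneg] at h2
  · intro h
    refine ⟨ContinuousLinearMap.isSelfAdjoint_iff_isSymmetric.mp (hC.sub hA), fun u => ?_⟩
    rw [ContinuousLinearMap.reApplyInnerSelf, ContinuousLinearMap.sub_apply, inner_sub_left,
      map_sub, sub_nonneg]
    exact h u

lemma isSelfAdjoint_ofReal_smul (t : ℝ) (A : H →L[ℂ] H) (hA : IsSelfAdjoint A) :
    IsSelfAdjoint ((t : ℂ) • A) := by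
  have ht : IsSelfAdjoint (t : ℂ) := Complex.conj_ofReal t
  exact ht.smul hA

lemma smul_rankOneProj_re_inner (t : ℝ) (y u : H) :
    RCLike.re ⟪((t : ℂ) • rankOneProj y) u, u⟫_ℂ = t * ‖⟪y, u⟫_ℂ‖ ^ 2 := by
  rw [ContinuousLinearMap.smul_apply, rankOneProj_apply, smul_smul, inner_smul_left,
    map_mul (starRingEnd ℂ), Complex.conj_ofReal, mul_assoc, RCLike.conj_mul]
  simp [← RCLike.ofReal_pow, ← RCLike.ofReal_mul, ← Complex.ofReal_pow]

lemma effect_le_of_atoms_le (E B : H →L[ℂ] H) (hE : IsEffect E) (hB0 : 0 ≤ B)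
    (hub : ∀ (P : H →L[ℂ] H) (t : ℝ), IsRankOneProjection P → t ∈ Set.Icc (0:ℝ) 1 →
      (t : ℂ) • P ≤ E → (t : ℂ) • P ≤ B) : E ≤ B := by
  obtain ⟨hE0, hE1⟩ := hE
  have hEsa : IsSelfAdjoint E := .of_nonneg hE0
  have hBsa : IsSelfAdjoint B := .of_nonneg hB0
  set S := CFC.sqrt E with hSdef
  have hS0 : (0 : H →L[ℂ] H) ≤ S := CFC.sqrt_nonneg E
  have hSsa : IsSelfAdjoint S := .of_nonneg hS0
  have hsym := ContinuousLinearMap.isSelfAdjoint_iff_isSymmetric.mp hSsa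
  have hSS : ∀ u, S (S u) = E u := by
    intro u
    have h2 : S * S = E := by have := CFC.sq_sqrt E hE0; rwa [sq] at this
    rw [← ContinuousLinearMap.mul_apply, h2]
  have hnorm : ∀ u, RCLike.re ⟪E u, u⟫_ℂ = ‖S u‖ ^ 2 := by
    intro u
    rw [← hSS u]
    have h3 : ⟪S (S u), u⟫_ℂ = ⟪S u, S u⟫_ℂ := hsym (S u) u
    rw [h3, inner_self_eq_norm_sq]
  rw [le_iff_re_inner E B hEsa hBsa]
  intro z
  by_cases hz : E z = 0
  · rw [hz]
    simpa using ((ContinuousLinearMap.nonneg_iff_isPositive B).mp hB0).re_inner_nonneg_left z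
  · set w := S z with hw
    have hwne : w ≠ 0 := fun h => hz (by rw [← hSS z, ← hw, h, map_zero])
    have hwpos : (0:ℝ) < ‖w‖ := norm_pos_iff.mpr hwne
    set x : H := ((‖w‖⁻¹ : ℝ) : ℂ) • w with hx
    have hSx : S x = ((‖w‖⁻¹ : ℝ) : ℂ) • E z := by rw [hx, map_smul, hw, hSS]
    have hSxne : S x ≠ 0 := by
      rw [hSx]
      intro h
      rcases smul_eq_zero.mp h with h | h
      · have : (‖w‖⁻¹ : ℝ) ≠ 0 := by positivity
        exact this (by exact_mod_cast h)
      · exact hz h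
    have hSxpos : (0:ℝ) < ‖S x‖ := norm_pos_iff.mpr hSxne
    set t : ℝ := ‖S x‖ ^ 2 with ht
    have htpos : 0 < t := by positivity
    have hxnorm : ‖x‖ = 1 := by
      rw [hx, norm_smul]
      simp [abs_of_pos (inv_pos.mpr hwpos), inv_mul_cancel₀ hwpos.ne']
    have hSxself : RCLike.re ⟪E x, x⟫_ℂ = t := by rw [hnorm x, ht]
    have ht1 : t ≤ 1 := by
      have h1 := (le_iff_re_inner E 1 hEsa (IsSelfAdjoint.one _)).mp hE1 x
      rw [ContinuousLinearMap.one_apply, inner_self_eq_norm_sq, hxnorm] at h1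
      rw [← hSxself]
      simpa using h1
    set y : H := ((‖S x‖⁻¹ : ℝ) : ℂ) • S x with hy
    have hynorm : ‖y‖ = 1 := by
      rw [hy, norm_smul]
      simp [abs_of_pos (inv_pos.mpr hSxpos), inv_mul_cancel₀ hSxpos.ne']
    have hkey : ∀ u, t * ‖⟪y, u⟫_ℂ‖ ^ 2 = ‖⟪S x, u⟫_ℂ‖ ^ 2 := by
      intro u
      rw [hy, inner_smul_left, Complex.conj_ofReal, norm_mul, mul_pow, ht]
      have : ‖((‖S x‖⁻¹ : ℝ) : ℂ)‖ = ‖S x‖⁻¹ := by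
        simp [abs_of_pos (inv_pos.mpr hSxpos)]
      rw [this]
      field_simp
    have hCS : ∀ u, ‖⟪S x, u⟫_ℂ‖ ^ 2 ≤ RCLike.re ⟪E u, u⟫_ℂ := by
      intro u
      rw [show ⟪S x, u⟫_ℂ = ⟪x, S u⟫_ℂ from hsym x u, hnorm u]
      have h4 := norm_inner_le_norm (𝕜 := ℂ) x (S u)
      rw [hxnorm, one_mul] at h4
      calc ‖⟪x, S u⟫_ℂ‖ ^ 2 ≤ ‖S u‖ ^ 2 := by
              apply pow_le_pow_left₀ (norm_nonneg _) h4
        _ = ‖S u‖ ^ 2 := rfl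
    have saP : IsSelfAdjoint ((t : ℂ) • rankOneProj y) := by
      apply isSelfAdjoint_ofReal_smul
      exact (isRankOneProjection_rankOneProj y hynorm).2.1
    have hPle : ((t : ℂ) • rankOneProj y) ≤ E := by
      rw [le_iff_re_inner _ _ saP hEsa]
      intro u
      rw [smul_rankOneProj_re_inner, hkey u]
      exact hCS u
    have hPB := hub (rankOneProj y) t (isRankOneProjection_rankOneProj y hynorm)
      ⟨htpos.le, ht1⟩ hPle
    have hfin := (le_iff_re_inner _ _ saP hBsa).mp hPB z
    rw [smul_rankOneProj_re_inner, hkey z] at hfin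
    have hSxz : ⟪S x, z⟫_ℂ = ((‖w‖ : ℝ) : ℂ) := by
      have hEz : E z = S w := (hSS z).symm
      rw [hSx, inner_smul_left, Complex.conj_ofReal, hEz, show ⟪S w, z⟫_ℂ = ⟪w, S z⟫_ℂ from hsym w z, ← hw,
        inner_self_eq_norm_sq_to_K]
      rw [sq, ← mul_assoc]
      have hne : (‖w‖ : ℂ) ≠ 0 := by exact_mod_cast hwpos.ne'
      push_cast
      field_simp
      rfl
    rw [hSxz] at hfin
    rw [hnorm z, ← hw]
    simpa using hfin

end Aux

/-- Busch–Gudder: every effect `E` is the supremum, in the partially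
ordered set `E(H)`, of the set of weak atoms `tP` it majorizes. -/
theorem effect_eq_sup_of_weak_atoms
    {H : Type} [NormedAddCommGroup H] [InnerProductSpace ℂ H] [CompleteSpace H]
    (E : H →L[ℂ] H) (hE : IsEffect E) :
    (∀ F ∈ {F : H →L[ℂ] H | ∃ (P : H →L[ℂ] H) (t : ℝ), IsRankOneProjection P ∧
        t ∈ Set.Icc (0:ℝ) 1 ∧ F = (t : ℂ) • P ∧ (t : ℂ) • P ≤ E}, F ≤ E) ∧
      ∀ B : H →L[ℂ] H, IsEffect B →
        (∀ F ∈ {F : H →L[ℂ] H | ∃ (P : H →L[ℂ] H) (t : ℝ), IsRankOneProjection P ∧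
          t ∈ Set.Icc (0:ℝ) 1 ∧ F = (t : ℂ) • P ∧ (t : ℂ) • P ≤ E}, F ≤ B) → E ≤ B := by
  constructor
  · rintro F ⟨P, t, hP, htI, rfl, hle⟩
    exact hle
  · rintro B hB hub
    exact effect_le_of_atoms_le E B hE hB.1
      (fun P t hP ht hle => hub _ ⟨P, t, hP, ht, rfl, hle⟩)
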